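/- arXiv:math/0109108 — 3 statements merged into one kernel-verified Lean document; each statement's English description precedes it below -/
import Mathlib

section
/- For every n ≥ 2, ζ(n) = (2^n/(2^n - 1)) ∫_{(0,1)^n} 1/(1 - x₁²x₂²···x_n²) dx. -/
open MeasureTheory

private lemma intIoo_pow (m : ℕ) :
    ∫ x in Set.Ioo (0:ℝ) 1, x ^ m = ((m:ℝ) + 1)⁻¹ := by
  rw [← MeasureTheory.integral_Ioc_eq_integral_Ioo,
    ← intervalIntegral.integral_of_le zero_le_one, integral_pow]
  simp

/-- For `n ≥ 2`, `ζ(n) = (2^n/(2^n - 1)) ∫_{(0,1)^n} 1/(1 - x₁²⋯x_n²) dx`. -/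
theorem zeta_eq_integral_cube (n : ℕ) (hn : 2 ≤ n) :
    riemannZeta n =
      ((2 ^ n / (2 ^ n - 1) *
        ∫ x in Set.pi Set.univ fun _ : Fin n => Set.Ioo (0 : ℝ) 1,
          (1 - ∏ i, x i ^ 2)⁻¹ : ℝ) : ℂ) := by
  have hn1 : 1 < n := hn
  set cube : Set (Fin n → ℝ) := Set.pi Set.univ fun _ : Fin n => Set.Ioo (0:ℝ) 1 with hcube
  have hcube_meas : MeasurableSet cube :=
    MeasurableSet.univ_pi fun _ => measurableSet_Ioo
  set F : ℕ → (Fin n → ℝ) → ℝ := fun k x => ∏ i, x i ^ (2*k) with hF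
  have hFcont : ∀ k, Continuous (F k) := fun k =>
    continuous_finset_prod _ fun i _ => (continuous_apply i).pow _
  have hFnonneg : ∀ k x, 0 ≤ F k x := fun k x =>
    Finset.prod_nonneg fun i _ => by
      rw [pow_mul]; positivity
  have hcompact : IsCompact (Set.pi Set.univ fun _ : Fin n => Set.Icc (0:ℝ) 1) :=
    isCompact_univ_pi fun _ => isCompact_Icc
  have hFint : ∀ k, Integrable (F k) (volume.restrict cube) := by
    intro k
    refine (((hFcont k).continuousOn.integrableOn_compact hcompact)).mono_set ?_
    exact Set.pi_mono fun i _ => Set.Ioo_subset_Icc_self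
  -- value of each term's integral
  have hFval : ∀ k, ∫ x in cube, F k x = ((2*(k:ℝ)+1)⁻¹) ^ n := by
    intro k
    have hind : cube.indicator (F k) =
        fun x => ∏ i, (Set.Ioo (0:ℝ) 1).indicator (fun t => t ^ (2*k)) (x i) := by
      funext x
      by_cases hx : x ∈ cube
      · rw [Set.indicator_of_mem hx]
        exact Finset.prod_congr rfl fun i _ =>
          (Set.indicator_of_mem (hx i (Set.mem_univ i)) _).symm
      · rw [Set.indicator_of_notMem hx]
        rw [hcube, Set.mem_univ_pi] at hx
        push_neg at hx
        obtain ⟨i, hi⟩ := hx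
        symm
        exact Finset.prod_eq_zero (Finset.mem_univ i) (Set.indicator_of_notMem hi _)
    rw [← MeasureTheory.integral_indicator hcube_meas, hind, MeasureTheory.volume_pi,
      MeasureTheory.integral_fintype_prod_eq_pow,
      MeasureTheory.integral_indicator measurableSet_Ioo, intIoo_pow]
    simp only [Fintype.card_fin]
    push_cast
    ring_nf
  -- summability facts
  have hS : Summable (fun m : ℕ => ((m:ℝ)^n)⁻¹) := Real.summable_nat_pow_inv.mpr hn1
  have hinj : Function.Injective (fun k : ℕ => 2*k+1) := by
    intro a b h
    simp only at h
    omega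
  have hodd : Summable (fun k : ℕ => (((2*k+1 : ℕ):ℝ)^n)⁻¹) := hS.comp_injective hinj
  have hodd_eq : (fun k : ℕ => (((2*k+1 : ℕ):ℝ)^n)⁻¹) =
      fun k : ℕ => ((2*(k:ℝ)+1)⁻¹)^n := by
    funext k; push_cast; rw [inv_pow]
  have hnormsum : Summable fun k => ∫ x in cube, ‖F k x‖ := by
    have : (fun k => ∫ x in cube, ‖F k x‖) = fun k : ℕ => ((2*(k:ℝ)+1)⁻¹)^n := by
      funext k
      rw [← hFval k]
      exact integral_congr_ae (Filter.Eventually.of_forall fun x =>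
        Real.norm_of_nonneg (hFnonneg k x))
    rw [this, ← hodd_eq]
    exact hodd
  -- the integral equals the odd sum
  have hint : (∫ x in cube, (1 - ∏ i, x i ^ 2)⁻¹) =
      ∑' k : ℕ, (((2*k+1 : ℕ):ℝ)^n)⁻¹ := by
    have hpt : ∀ x ∈ cube, (1 - ∏ i, x i ^ 2)⁻¹ = ∑' k : ℕ, F k x := by
      intro x hx
      have hx' : ∀ i, x i ∈ Set.Ioo (0:ℝ) 1 := fun i => hx i (Set.mem_univ i)
      have h0 : (0:ℝ) ≤ ∏ i, x i ^ 2 := Finset.prod_nonneg fun i _ => sq_nonneg _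
      have h1 : (∏ i, x i ^ 2) < 1 := by
        have : (∏ i, x i ^ 2) < ∏ i : Fin n, (1:ℝ) := by
          refine Finset.prod_lt_prod_of_nonempty
            (fun i _ => by have := hx' i; nlinarith [this.1, this.2])
            (fun i _ => by have := hx' i; nlinarith [this.1, this.2]) ?_
          exact ⟨⟨0, by omega⟩, Finset.mem_univ _⟩
        simpa using this
      have hgeo := tsum_geometric_of_lt_one h0 h1
      rw [← hgeo]
      refine tsum_congr fun k => ?_
      show (∏ i, x i ^ 2) ^ k = ∏ i, x i ^ (2*k)
      rw [← Finset.prod_pow]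
      exact Finset.prod_congr rfl fun i _ => (pow_mul _ 2 k).symm
    calc (∫ x in cube, (1 - ∏ i, x i ^ 2)⁻¹)
        = ∫ x in cube, ∑' k : ℕ, F k x := by
          exact setIntegral_congr_fun hcube_meas hpt
      _ = ∑' k : ℕ, ∫ x in cube, F k x :=
          (integral_tsum_of_summable_integral_norm hFint hnormsum).symm
      _ = ∑' k : ℕ, (((2*k+1 : ℕ):ℝ)^n)⁻¹ := by
          rw [hodd_eq]
          exact tsum_congr fun k => hFval k
  -- series rearrangement
  have heven : Summable (fun k : ℕ => (((2*k : ℕ):ℝ)^n)⁻¹) := by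
    refine (hS.mul_left ((2:ℝ)^n)⁻¹).congr fun k => ?_
    push_cast
    rw [mul_pow, mul_inv]
  have heven_val : ∑' k : ℕ, (((2*k : ℕ):ℝ)^n)⁻¹ =
      ((2:ℝ)^n)⁻¹ * ∑' m : ℕ, ((m:ℝ)^n)⁻¹ := by
    rw [← tsum_mul_left]
    refine tsum_congr fun k => ?_
    push_cast
    rw [mul_pow, mul_inv]
  have hsplit : (∑' k : ℕ, (((2*k : ℕ):ℝ)^n)⁻¹) + ∑' k : ℕ, (((2*k+1 : ℕ):ℝ)^n)⁻¹ =
      ∑' m : ℕ, ((m:ℝ)^n)⁻¹ := by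
    exact tsum_even_add_odd (f := fun m : ℕ => ((m:ℝ)^n)⁻¹) heven hodd
  have h2n : (1:ℝ) < 2^n := one_lt_pow₀ one_lt_two (by omega)
  have hne2 : ((2:ℝ)^n) ≠ 0 := by positivity
  have hne : (2:ℝ)^n - 1 ≠ 0 := by linarith
  have key : (∑' m : ℕ, ((m:ℝ)^n)⁻¹) =
      2^n/(2^n-1) * ∫ x in cube, (1 - ∏ i, x i ^ 2)⁻¹ := by
    rw [hint]
    rw [heven_val] at hsplit
    have h' : (∑' m : ℕ, ((m:ℝ)^n)⁻¹) +
        (2:ℝ)^n * (∑' k : ℕ, (((2*k+1 : ℕ):ℝ)^n)⁻¹)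
        = (2:ℝ)^n * ∑' m : ℕ, ((m:ℝ)^n)⁻¹ := by
      have h2 := congrArg (fun t => (2:ℝ)^n * t) hsplit
      simp only [mul_add, ← mul_assoc, mul_inv_cancel₀ hne2, one_mul] at h2
      linarith [h2]
    rw [div_mul_eq_mul_div, eq_div_iff hne]
    linear_combination -h' 
  rw [zeta_nat_eq_tsum_of_gt_one hn1, ← key, Complex.ofReal_tsum]
  refine tsum_congr fun m => ?_
  push_cast
  rw [one_div]
end

section
/- For every positive integer n, ζ(2n) = (π^{2n}/(4^n - 1)) ∫_{(0,1)^n} (x₁∧x₂)(x₂∧x₃)···(x_{n-1}∧x_n)(x_n∧x₁) dm(x̄), where a∧b = min(a,b). -/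
open MeasureTheory Real

noncomputable section
namespace ZetaMin

def c (k : ℕ) : ℝ := (2 * k + 1) * π / 2
def a (k : ℕ) : ℝ := 8 / (π ^ 2 * (2 * k + 1) ^ 2)
def s (k : ℕ) (x : ℝ) : ℝ := Real.sin (c k * x)

lemma hB (x : ℝ) : (Polynomial.map (algebraMap ℚ ℝ) (Polynomial.bernoulli 2)).eval x
    = x ^ 2 - x + 1/6 := by
  simp [Polynomial.bernoulli_def, Finset.sum_range_succ]
  norm_num [bernoulli_eq_bernoulli'_of_ne_one, bernoulli'_two]
  ring

lemma hasSum_cos_B {x : ℝ} (hx : x ∈ Set.Icc (0:ℝ) 1) :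
    HasSum (fun m : ℕ => 1 / (m:ℝ)^2 * Real.cos (2 * π * m * x)) (π^2 * (x^2 - x + 1/6)) := by
  have h := hasSum_one_div_nat_pow_mul_cos (k := 1) one_ne_zero hx
  rw [hB] at h
  convert h using 2 <;> norm_num [Nat.factorial]
  ring

lemma hasSum_g {t : ℝ} (ht : t ∈ Set.Icc (0:ℝ) 2) :
    HasSum (fun k : ℕ => 1 / ((2*(k:ℝ)+1))^2 * Real.cos (c k * t)) (π^2 * (1 - t) / 8) := by
  obtain ⟨ht0, ht2⟩ := ht
  set f : ℕ → ℝ := fun m => 1 / (m:ℝ)^2 * Real.cos (2 * π * m * (t/4)) with hf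
  have htot : HasSum f (π^2 * ((t/4)^2 - t/4 + 1/6)) :=
    hasSum_cos_B ⟨by linarith, by linarith⟩
  have heven : HasSum (fun k => f (2 * k)) ((π^2 * ((t/2)^2 - t/2 + 1/6)) / 4) := by
    have h2 := (hasSum_cos_B (x := t/2) ⟨by linarith, by linarith⟩).div_const 4
    have hfun : (fun k : ℕ => f (2 * k))
        = fun k : ℕ => 1 / (k:ℝ)^2 * Real.cos (2 * π * k * (t/2)) / 4 := by
      funext k
      simp only [hf]
      push_cast
      rw [show 2 * π * (2 * (k:ℝ)) * (t / 4) = 2 * π * k * (t/2) by ring]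
      ring
    rw [hfun]
    exact h2
  have hodd : Summable (fun k => f (2 * k + 1)) :=
    htot.summable.comp_injective (fun p q hpq => by omega)
  have hsplit := (HasSum.even_add_odd heven hodd.hasSum).unique htot
  have hoddsum : HasSum (fun k => f (2 * k + 1))
      (π^2 * ((t/4)^2 - t/4 + 1/6) - (π^2 * ((t/2)^2 - t/2 + 1/6)) / 4) := by
    have h3 := hodd.hasSum
    rwa [show (∑' k, f (2*k+1)) = π^2 * ((t/4)^2 - t/4 + 1/6)
        - (π^2 * ((t/2)^2 - t/2 + 1/6)) / 4 by linarith] at h3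
  have hfun : (fun k : ℕ => 1 / ((2*(k:ℝ)+1))^2 * Real.cos (c k * t))
      = fun k : ℕ => f (2 * k + 1) := by
    funext k
    simp only [hf]
    push_cast
    rw [show 2 * π * (2*(k:ℝ)+1) * (t/4) = c k * t by rw [c]; push_cast; ring]
  rw [hfun, show π^2 * (1 - t) / 8 = π^2 * ((t/4)^2 - t/4 + 1/6)
      - (π^2 * ((t/2)^2 - t/2 + 1/6)) / 4 by ring]
  exact hoddsum

lemma min_eq (x y : ℝ) : min x y = (x + y - |x - y|) / 2 := by
  rcases le_total x y with h | h
  · rw [min_eq_left h, abs_of_nonpos (by linarith)]; ring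
  · rw [min_eq_right h, abs_of_nonneg (by linarith)]; ring

lemma c_nonneg (k : ℕ) : 0 ≤ c k := by
  rw [c]; positivity

lemma hasSum_min {x y : ℝ} (hx : x ∈ Set.Icc (0:ℝ) 1) (hy : y ∈ Set.Icc (0:ℝ) 1) :
    HasSum (fun k : ℕ => a k * (s k x * s k y)) (min x y) := by
  obtain ⟨hx0, hx1⟩ := hx
  obtain ⟨hy0, hy1⟩ := hy
  have hu : |x - y| ∈ Set.Icc (0:ℝ) 2 := ⟨abs_nonneg _, by
    rcases le_total x y with h | h
    · rw [abs_of_nonpos (by linarith)]; linarith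
    · rw [abs_of_nonneg (by linarith)]; linarith⟩
  have hv : x + y ∈ Set.Icc (0:ℝ) 2 := ⟨by linarith, by linarith⟩
  have h := ((hasSum_g hu).sub (hasSum_g hv)).mul_left (4/π^2)
  have hfun : (fun k : ℕ => 4/π^2 * (1 / ((2*(k:ℝ)+1))^2 * Real.cos (c k * |x - y|)
        - 1 / ((2*(k:ℝ)+1))^2 * Real.cos (c k * (x + y))))
      = fun k : ℕ => a k * (s k x * s k y) := by
    funext k
    have habs : Real.cos (c k * |x - y|) = Real.cos (c k * (x - y)) := by
      rw [show c k * |x - y| = |c k * (x - y)| by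
        rw [abs_mul, abs_of_nonneg (c_nonneg k)], Real.cos_abs]
    rw [habs, s, s, a]
    have hprod : Real.sin (c k * x) * Real.sin (c k * y)
        = (Real.cos (c k * (x - y)) - Real.cos (c k * (x + y))) / 2 := by
      rw [show c k * (x - y) = c k * x - c k * y by ring,
        show c k * (x + y) = c k * x + c k * y by ring, Real.cos_sub, Real.cos_add]
      ring
    rw [hprod]
    have h2k : ((2*(k:ℝ)+1))^2 ≠ 0 := by positivity
    field_simp
    ring
  rw [hfun] at h
  have hval : 4/π^2 * (π^2 * (1 - |x - y|) / 8 - π^2 * (1 - (x+y)) / 8) = min x y := by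
    rw [min_eq]
    field_simp
    ring
  rwa [hval] at h


lemma integral_cos_mul (d : ℝ) :
    ∫ x in (0:ℝ)..1, Real.cos (d * x) = if d = 0 then 1 else Real.sin d / d := by
  split_ifs with hd
  · simp [hd]
  · rw [intervalIntegral.integral_comp_mul_left _ hd]
    simp [integral_cos, div_eq_inv_mul]

lemma s_orth (j k : ℕ) :
    ∫ x in (0:ℝ)..1, s j x * s k x = if j = k then 1/2 else 0 := by
  have hprod : ∀ x : ℝ, s j x * s k x
      = (Real.cos ((c j - c k) * x) - Real.cos ((c j + c k) * x)) / 2 := by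
    intro x
    rw [s, s, show (c j - c k) * x = c j * x - c k * x by ring,
      show (c j + c k) * x = c j * x + c k * x by ring, Real.cos_sub, Real.cos_add]
    ring
  have hi1 : IntervalIntegrable (fun x => Real.cos ((c j - c k) * x)) volume 0 1 :=
    (Real.continuous_cos.comp (continuous_const.mul continuous_id)).intervalIntegrable 0 1
  have hi2 : IntervalIntegrable (fun x => Real.cos ((c j + c k) * x)) volume 0 1 :=
    (Real.continuous_cos.comp (continuous_const.mul continuous_id)).intervalIntegrable 0 1
  simp only [hprod]
  rw [intervalIntegral.integral_div, intervalIntegral.integral_sub hi1 hi2,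
    integral_cos_mul, integral_cos_mul]
  have hsum : c j + c k = (j + k + 1) * π := by rw [c, c]; push_cast; ring
  have hdiff : c j - c k = ((j:ℝ) - k) * π := by rw [c, c]; push_cast; ring
  have hsumne : c j + c k ≠ 0 := by
    rw [hsum]
    positivity
  have hsinsum : Real.sin (c j + c k) = 0 := by
    rw [hsum, show ((j:ℝ) + k + 1) = ((j + k + 1 : ℤ) : ℝ) by push_cast; ring]
    exact Real.sin_int_mul_pi _
  rw [if_neg hsumne, hsinsum]
  by_cases h : j = k
  · subst h
    rw [if_pos (sub_self _), if_pos rfl]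
    norm_num
  · have hne : c j - c k ≠ 0 := by
      rw [hdiff]
      intro hcon
      rcases mul_eq_zero.1 hcon with h1 | h1
      · exact h (by exact_mod_cast sub_eq_zero.1 h1)
      · exact Real.pi_ne_zero h1
    rw [if_neg hne, if_neg h, hdiff,
      show ((j:ℝ) - k) * π = ((j - k : ℤ) : ℝ) * π by push_cast; ring,
      Real.sin_int_mul_pi]
    norm_num

lemma hasSum_pi_prod : ∀ (n : ℕ) (f : Fin n → ℕ → ℝ) (S : Fin n → ℝ),
    (∀ i, HasSum (f i) (S i)) →
    HasSum (fun κ : Fin n → ℕ => ∏ i, f i (κ i)) (∏ i, S i) := by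
  intro n
  induction n with
  | zero =>
    intro f S _
    simp only [Finset.univ_eq_empty, Finset.prod_empty]
    exact hasSum_single (f := fun _ : Fin 0 → ℕ => (1:ℝ)) default
      (fun b hb => absurd (Subsingleton.elim b default) hb)
  | succ n ih =>
    intro f S h
    have h0 := h 0
    have htail := ih (fun i => f i.succ) (fun i => S i.succ) (fun i => h i.succ)
    have hsummable : Summable (fun p : ℕ × (Fin n → ℕ) =>
        f 0 p.1 * ∏ i, f i.succ (p.2 i)) := by
      apply Summable.of_norm
      have h1 : Summable (fun k => ‖f 0 k‖) := summable_norm_iff.2 h0.summable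
      have h2 : Summable (fun κ : Fin n → ℕ => ‖∏ i, f i.succ (κ i)‖) :=
        summable_norm_iff.2 htail.summable
      simpa [norm_mul] using h1.mul_norm h2
    have hmul := h0.mul htail hsummable
    rw [← Equiv.hasSum_iff (Fin.consEquiv (fun _ : Fin (n+1) => ℕ))]
    have hfun : ((fun κ : Fin (n+1) → ℕ => ∏ i, f i (κ i)) ∘ (Fin.consEquiv (fun _ : Fin (n+1) => ℕ)))
        = fun p : ℕ × (Fin n → ℕ) => f 0 p.1 * ∏ i, f i.succ (p.2 i) := by
      funext p
      simp only [Function.comp_apply]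
      have he : (Fin.consEquiv (fun _ : Fin (n+1) => ℕ)) p = Fin.cons p.1 p.2 := rfl
      rw [he, Fin.prod_univ_succ, Fin.cons_zero]
      simp only [Fin.cons_succ]
    rw [hfun, Fin.prod_univ_succ]
    exact hmul


lemma integral_term (n : ℕ) (e : Equiv.Perm (Fin n)) (κ : Fin n → ℕ) :
    (∫ x in Set.pi Set.univ (fun _ : Fin n => Set.Ioo (0:ℝ) 1),
      ∏ i, a (κ i) * (s (κ i) (x i) * s (κ i) (x (e i))))
    = (∏ i, a (κ i)) * ∏ j, (if κ j = κ (e.symm j) then (1:ℝ)/2 else 0) := by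
  have hrw : (fun x : Fin n → ℝ => ∏ i, a (κ i) * (s (κ i) (x i) * s (κ i) (x (e i))))
      = fun x => (∏ i, a (κ i)) * ∏ j, (s (κ j) (x j) * s (κ (e.symm j)) (x j)) := by
    funext x
    rw [Finset.prod_mul_distrib]
    congr 1
    rw [Finset.prod_mul_distrib, Finset.prod_mul_distrib]
    congr 1
    have h2 := Equiv.prod_comp e (fun j => s (κ (e.symm j)) (x j))
    simp only [Equiv.symm_apply_apply] at h2
    exact h2
  rw [hrw, integral_const_mul]
  congr 1
  have hind : (Set.pi Set.univ (fun _ : Fin n => Set.Ioo (0:ℝ) 1)).indicator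
      (fun x : Fin n → ℝ => ∏ j, (s (κ j) (x j) * s (κ (e.symm j)) (x j)))
      = fun x => ∏ j, (Set.Ioo (0:ℝ) 1).indicator
          (fun u => s (κ j) u * s (κ (e.symm j)) u) (x j) := by
    funext x
    by_cases hx : x ∈ Set.pi Set.univ (fun _ : Fin n => Set.Ioo (0:ℝ) 1)
    · rw [Set.indicator_of_mem hx]
      exact Finset.prod_congr rfl fun j _ =>
        (Set.indicator_of_mem (hx j (Set.mem_univ j))
          (fun u => s (κ j) u * s (κ (e.symm j)) u)).symm
    · rw [Set.indicator_of_notMem hx]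
      rw [Set.mem_univ_pi] at hx
      push_neg at hx
      obtain ⟨j, hj⟩ := hx
      exact (Finset.prod_eq_zero (Finset.mem_univ j) (Set.indicator_of_notMem hj
        (fun u => s (κ j) u * s (κ (e.symm j)) u))).symm
  rw [← MeasureTheory.integral_indicator (MeasurableSet.univ_pi fun _ => measurableSet_Ioo),
    hind, volume_pi, MeasureTheory.integral_fintype_prod_eq_prod (ι := Fin n)
      (fun j u => (Set.Ioo (0:ℝ) 1).indicator (fun v => s (κ j) v * s (κ (e.symm j)) v) u)]
  refine Finset.prod_congr rfl fun j _ => ?_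
  rw [MeasureTheory.integral_indicator measurableSet_Ioo,
    ← MeasureTheory.integral_Ioc_eq_integral_Ioo,
    ← intervalIntegral.integral_of_le zero_le_one]
  exact s_orth _ _

lemma cyclic_const {N : ℕ} (κ : Fin (N+1) → ℕ) (h : ∀ i, κ (i + 1) = κ i) :
    ∀ i, κ i = κ 0 := by
  intro i
  obtain ⟨v, hv⟩ := i
  induction v with
  | zero =>
    congr 1
  | succ v ih =>
    have hv' : v < N + 1 := Nat.lt_of_succ_lt hv
    have hstep : (⟨v, hv'⟩ : Fin (N+1)) + 1 = ⟨v+1, hv⟩ := by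
      rcases Nat.eq_zero_or_pos N with h0 | h0
      · subst h0; omega
      · rw [Fin.ext_iff, Fin.add_def]
        simp only [Fin.val_one']
        rw [Nat.mod_eq_of_lt (by omega : 1 < N + 1)]
        exact Nat.mod_eq_of_lt hv
    rw [← hstep, h, ih hv']

end ZetaMin

open ZetaMin in
/-- For every positive integer `n`,
`ζ(2n) = (π^{2n}/(4^n - 1)) ∫_{(0,1)^n} (x₁∧x₂)(x₂∧x₃)⋯(x_n∧x₁) dm(x̄)`,
where the product of minima is taken cyclically. -/
theorem zeta_even_eq_integral_min (n : ℕ) (hn : 0 < n) :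
    riemannZeta (2 * n) =
      ((π ^ (2 * n) / (4 ^ n - 1) *
        ∫ x in Set.pi Set.univ fun _ : Fin n => Set.Ioo (0 : ℝ) 1,
          ∏ i : Fin n, min (x i) (x ⟨(i.val + 1) % n, Nat.mod_lt _ hn⟩) : ℝ) : ℂ) := by
  obtain ⟨N, rfl⟩ : ∃ N, n = N + 1 := ⟨n - 1, by omega⟩
  set e : Equiv.Perm (Fin (N+1)) := finRotate (N+1) with he
  have hmk : ∀ i : Fin (N+1),
      (⟨(i.val + 1) % (N+1), Nat.mod_lt _ hn⟩ : Fin (N+1)) = e i := by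
    intro i
    rw [he, finRotate_succ_apply, Fin.ext_iff, Fin.add_def]
    simp only [Fin.val_one']
    conv_lhs => rw [Nat.add_mod, Nat.mod_eq_of_lt i.isLt]
  set T := Set.pi Set.univ fun _ : Fin (N+1) => Set.Ioo (0:ℝ) 1 with hT
  have hTmeas : MeasurableSet T := MeasurableSet.univ_pi fun _ => measurableSet_Ioo
  have ha_sum : Summable a := by
    have h1 : Summable (fun m : ℕ => 1 / (m:ℝ)^2) :=
      Real.summable_one_div_nat_pow.2 one_lt_two
    have h2 : Summable (fun k : ℕ => 1 / ((2*k+1 : ℕ):ℝ)^2) :=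
      h1.comp_injective (fun p q h => by omega)
    refine (h2.mul_left (8/π^2)).congr fun k => ?_
    rw [a]
    push_cast
    rw [div_mul_div_comm, mul_one]
  have ha_nonneg : ∀ k, 0 ≤ a k := fun k => by rw [a]; positivity
  have hs_abs : ∀ k u, |s k u| ≤ 1 := fun k u => Real.abs_sin_le_one _
  have hpt : ∀ x : Fin (N+1) → ℝ, x ∈ T →
      HasSum (fun κ : Fin (N+1) → ℕ => ∏ i, a (κ i) * (s (κ i) (x i) * s (κ i) (x (e i))))
        (∏ i, min (x i) (x (e i))) := by
    intro x hx
    exact hasSum_pi_prod (N+1) (fun i k => a k * (s k (x i) * s k (x (e i)))) _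
      (fun i => hasSum_min (Set.Ioo_subset_Icc_self (hx i (Set.mem_univ i)))
        (Set.Ioo_subset_Icc_self (hx (e i) (Set.mem_univ _))))
  have hmeas : ∀ κ : Fin (N+1) → ℕ, AEStronglyMeasurable
      (fun x : Fin (N+1) → ℝ => ∏ i, a (κ i) * (s (κ i) (x i) * s (κ i) (x (e i))))
      (volume.restrict T) := by
    intro κ
    apply Continuous.aestronglyMeasurable
    apply continuous_finset_prod
    intro i _
    exact continuous_const.mul
      ((Real.continuous_sin.comp (continuous_const.mul (continuous_apply i))).mul
        (Real.continuous_sin.comp (continuous_const.mul (continuous_apply (e i)))))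
  have hbound : ∀ (κ : Fin (N+1) → ℕ) (x : Fin (N+1) → ℝ),
      ‖∏ i, a (κ i) * (s (κ i) (x i) * s (κ i) (x (e i)))‖ ≤ ∏ i, a (κ i) := by
    intro κ x
    rw [Real.norm_eq_abs, Finset.abs_prod]
    refine Finset.prod_le_prod (fun i _ => abs_nonneg _) fun i _ => ?_
    rw [abs_mul, abs_of_nonneg (ha_nonneg _), abs_mul]
    calc a (κ i) * (|s (κ i) (x i)| * |s (κ i) (x (e i))|)
        ≤ a (κ i) * (1 * 1) := by
          apply mul_le_mul_of_nonneg_left _ (ha_nonneg _)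
          exact mul_le_mul (hs_abs _ _) (hs_abs _ _) (abs_nonneg _) zero_le_one
      _ = a (κ i) := by ring
  have hA : Summable (fun κ : Fin (N+1) → ℕ => ∏ i, a (κ i)) :=
    (hasSum_pi_prod (N+1) (fun _ => a) (fun _ => ∑' k, a k)
      (fun _ => ha_sum.hasSum)).summable
  have hvol : volume T = 1 := by
    rw [hT, volume_pi_pi]
    simp [Real.volume_Ioo]
  have hlint : (∑' κ : Fin (N+1) → ℕ, ∫⁻ x,
      ‖∏ i, a (κ i) * (s (κ i) (x i) * s (κ i) (x (e i)))‖₊ ∂(volume.restrict T)) ≠ ⊤ := by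
    have hle : ∀ κ : Fin (N+1) → ℕ, (∫⁻ x,
        ‖∏ i, a (κ i) * (s (κ i) (x i) * s (κ i) (x (e i)))‖₊ ∂(volume.restrict T))
        ≤ ENNReal.ofReal (∏ i, a (κ i)) := by
      intro κ
      calc (∫⁻ x, ‖∏ i, a (κ i) * (s (κ i) (x i) * s (κ i) (x (e i)))‖₊
            ∂(volume.restrict T))
          ≤ ∫⁻ _x, ENNReal.ofReal (∏ i, a (κ i)) ∂(volume.restrict T) := by
            apply lintegral_mono
            intro x
            have hx1 : ((‖∏ i, a (κ i) * (s (κ i) (x i) * s (κ i) (x (e i)))‖₊ : ENNReal))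
                ≤ ENNReal.ofReal (∏ i, a (κ i)) := by
              rw [← ENNReal.ofReal_coe_nnreal, coe_nnnorm]
              exact ENNReal.ofReal_le_ofReal (hbound κ x)
            exact hx1
        _ = ENNReal.ofReal (∏ i, a (κ i)) := by
            rw [lintegral_const, Measure.restrict_apply_univ, hvol, mul_one]
    refine ne_top_of_le_ne_top ?_ (ENNReal.tsum_le_tsum hle)
    rw [← ENNReal.ofReal_tsum_of_nonneg
      (fun κ => Finset.prod_nonneg fun i _ => ha_nonneg _) hA]
    exact ENNReal.ofReal_ne_top
  have hint : (∫ x in T, ∏ i, min (x i) (x (e i)))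
      = ∑' κ : Fin (N+1) → ℕ, ((∏ i, a (κ i)) *
          ∏ j, (if κ j = κ (e.symm j) then (1:ℝ)/2 else 0)) := by
    rw [setIntegral_congr_fun hTmeas (fun x hx => ((hpt x hx).tsum_eq).symm)]
    rw [MeasureTheory.integral_tsum hmeas hlint]
    exact tsum_congr (fun κ => integral_term (N+1) e κ)
  set Z : ℝ := ∑' m : ℕ, 1/(m:ℝ)^(2*(N+1)) with hZdef
  have hZ : HasSum (fun m : ℕ => 1/(m:ℝ)^(2*(N+1))) Z :=
    (hasSum_zeta_nat (Nat.succ_ne_zero N)).summable.hasSum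
  have heven : HasSum (fun k : ℕ => 1/((2*k : ℕ):ℝ)^(2*(N+1))) (((4:ℝ)^(N+1))⁻¹ * Z) := by
    have h1 := hZ.mul_left ((4:ℝ)^(N+1))⁻¹
    have hfe : (fun k : ℕ => 1/((2*k:ℕ):ℝ)^(2*(N+1)))
        = fun k : ℕ => ((4:ℝ)^(N+1))⁻¹ * (1/(k:ℝ)^(2*(N+1))) := by
      funext k
      push_cast
      rw [mul_pow, show (2:ℝ)^(2*(N+1)) = 4^(N+1) by rw [pow_mul]; norm_num,
        one_div, mul_inv, one_div]
    rw [hfe]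
    exact h1
  have hodds : Summable (fun k : ℕ => 1/((2*k+1 : ℕ):ℝ)^(2*(N+1))) :=
    hZ.summable.comp_injective (fun p q h => by omega)
  have hsum2 := HasSum.even_add_odd (f := fun m : ℕ => 1/(m:ℝ)^(2*(N+1))) heven hodds.hasSum
  have hval := hsum2.unique hZ
  have hodd : HasSum (fun k : ℕ => 1/((2*k+1:ℕ):ℝ)^(2*(N+1)))
      (Z - ((4:ℝ)^(N+1))⁻¹ * Z) := by
    have h3 := hodds.hasSum
    rwa [show (∑' k : ℕ, 1/((2*k+1:ℕ):ℝ)^(2*(N+1))) = Z - ((4:ℝ)^(N+1))⁻¹ * Z by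
      linarith] at h3
  have hdiag : HasSum (fun k : ℕ => (a k / 2)^(N+1))
      ((4/π^2)^(N+1) * (Z - ((4:ℝ)^(N+1))⁻¹ * Z)) := by
    have h1 := hodd.mul_left ((4/π^2)^(N+1))
    have hfe : ∀ k : ℕ, (a k / 2)^(N+1)
        = (4/π^2)^(N+1) * (1/((2*k+1:ℕ):ℝ)^(2*(N+1))) := by
      intro k
      have hq : (2*(k:ℝ)+1)^2 ≠ 0 := by positivity
      have hπ : (π:ℝ) ≠ 0 := Real.pi_ne_zero
      have hbase : a k / 2 = 4/π^2 * (1/(2*(k:ℝ)+1)^2) := by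
        rw [a]
        field_simp
        ring
      rw [hbase, mul_pow, one_div ((2*(k:ℝ)+1)^2), inv_pow, ← pow_mul, ← one_div]
      push_cast
      ring
    rw [funext hfe]
    exact h1
  have hφinj : Function.Injective (fun k : ℕ => (fun _ : Fin (N+1) => k)) :=
    fun p q h => congrFun h 0
  have hgzero : ∀ κ : Fin (N+1) → ℕ,
      κ ∉ Set.range (fun k : ℕ => (fun _ : Fin (N+1) => k)) →
      ((∏ i, a (κ i)) * ∏ j, (if κ j = κ (e.symm j) then (1:ℝ)/2 else 0)) = 0 := by
    intro κ hκ
    by_contra hne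
    have hall : ∀ j, κ j = κ (e.symm j) := by
      intro j
      by_contra hj
      exact hne (mul_eq_zero_of_right _
        (Finset.prod_eq_zero (Finset.mem_univ j) (if_neg hj)))
    have hcyc : ∀ i, κ (i + 1) = κ i := by
      intro i
      have h5 := hall (e i)
      rw [Equiv.symm_apply_apply] at h5
      rwa [he, finRotate_succ_apply] at h5
    exact hκ ⟨κ 0, funext fun i => (cyclic_const κ hcyc i).symm⟩
  have hgsum : HasSum (fun κ : Fin (N+1) → ℕ => ((∏ i, a (κ i)) *
      ∏ j, (if κ j = κ (e.symm j) then (1:ℝ)/2 else 0)))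
      ((4/π^2)^(N+1) * (Z - ((4:ℝ)^(N+1))⁻¹ * Z)) := by
    rw [← hφinj.hasSum_iff hgzero]
    have hcomp : ((fun κ : Fin (N+1) → ℕ => ((∏ i, a (κ i)) *
        ∏ j, (if κ j = κ (e.symm j) then (1:ℝ)/2 else 0)))
          ∘ (fun k : ℕ => (fun _ : Fin (N+1) => k)))
        = fun k : ℕ => (a k / 2)^(N+1) := by
      funext k
      simp only [Function.comp_apply, eq_self_iff_true, if_true]
      rw [Finset.prod_const, Finset.prod_const, Finset.card_univ, Fintype.card_fin,
        ← mul_pow]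
      congr 1
      ring
    rw [hcomp]
    exact hdiag
  have hI : (∫ x in T, ∏ i, min (x i) (x (e i)))
      = (4/π^2)^(N+1) * (Z - ((4:ℝ)^(N+1))⁻¹ * Z) := by
    rw [hint]
    exact hgsum.tsum_eq
  have hπ : (π:ℝ) ≠ 0 := Real.pi_ne_zero
  have h41 : ((4:ℝ)^(N+1) - 1) ≠ 0 := by
    have h7 : (1:ℝ) < 4^(N+1) := by
      apply one_lt_pow₀ (by norm_num : (1:ℝ) < 4) (Nat.succ_ne_zero N)
    linarith
  have hreal : π^(2*(N+1))/(4^(N+1) - 1) *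
      ((4/π^2)^(N+1) * (Z - ((4:ℝ)^(N+1))⁻¹ * Z)) = Z := by
    have hsplit : ((4:ℝ)/π^2)^(N+1) = 4^(N+1)/π^(2*(N+1)) := by
      rw [div_pow, ← pow_mul]
    rw [hsplit]
    field_simp
  have hζ : riemannZeta (2 * ((N+1 : ℕ) : ℂ)) = ((Z : ℝ) : ℂ) := by
    have h1 := riemannZeta_two_mul_nat (k := N+1) (Nat.succ_ne_zero N)
    have h2 := (hasSum_zeta_nat (k := N+1) (Nat.succ_ne_zero N)).tsum_eq
    have h3 := hZdef.trans h2
    rw [h1, h3]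
    push_cast
    ring
  simp only [hmk]
  rw [hI, hreal]
  exact hζ

end
end

section
/- For σ ∈ S_{2n+1}, define Φ(σ) ∈ {-1,0,1}^{2n} by: in the list 0, σ(1), ..., σ(2n+1), 0, the entry Φ(σ)_j + 1 equals the number of neighbours of j in the list that are greater than j, for j = 1,...,2n. Then Φ(σ) is a Dyck path (all entries ±1, sum 0, nonnegative proper partial sums) if and only if σ is alternating with σ(1) > σ(2). -/
/-- In the list `0, σ(1), …, σ(n+1), 0` (values written as `1,…,n+1`, i.e. `Fin (n+1)`
elements shifted by one, with boundary entries `0` smaller than every value),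
`nbGt σ j` is the number of the two neighbours of the value `j` that are greater
than `j`. -/
def nbGt {n : ℕ} (σ : Equiv.Perm (Fin (n + 1))) (j : Fin (n + 1)) : ℕ :=
  (if h : (σ.symm j).val = 0 then 0
    else if j < σ ⟨(σ.symm j).val - 1, by have := (σ.symm j).isLt; omega⟩ then 1 else 0) +
  (if h : (σ.symm j).val = n then 0
    else if j < σ ⟨(σ.symm j).val + 1, by have := (σ.symm j).isLt; omega⟩ then 1 else 0)

/-- `Φ(σ) ∈ {-1,0,1}^n` for `σ ∈ S_{n+1}`: the `j`-th entry is `(nbGt σ j) - 1`,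
for the values `j = 1, …, n` (i.e. all values except the largest). -/
def PhiList (n : ℕ) (σ : Equiv.Perm (Fin (n + 1))) : List ℤ :=
  List.ofFn fun j : Fin n => (nbGt σ j.castSucc : ℤ) - 1

/-- A permutation (of `{1,…,m}`, written on `Fin m`) is alternating if
`σ(j) < σ(j+1) ↔ σ(j+1) > σ(j+2)` for all valid `j`. -/
def IsAlternating {m : ℕ} (σ : Equiv.Perm (Fin m)) : Prop :=
  ∀ j : ℕ, ∀ h : j + 2 < m,
    (σ ⟨j, by omega⟩ < σ ⟨j + 1, by omega⟩ ↔ σ ⟨j + 2, h⟩ < σ ⟨j + 1, by omega⟩)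

/-- A Dyck path: entries in `{-1,1}`, total sum `0`, proper partial sums nonnegative. -/
def IsDyck (l : List ℤ) : Prop :=
  (∀ x ∈ l, x = -1 ∨ x = 1) ∧ l.sum = 0 ∧
    ∀ k < l.length, 0 ≤ (l.take k).sum

lemma two_n_one_gt_one (n : ℕ) (hn : 0 < n) : 1 < 2 * n + 1 := by omega

lemma two_n_one_pos (n : ℕ) : 0 < 2 * n + 1 := by omega

lemma nbGt_apply {m : ℕ} (σ : Equiv.Perm (Fin (m + 1))) (p : Fin (m + 1)) :
    nbGt σ (σ p) =
      (if h : p.val = 0 then 0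
        else if σ p < σ ⟨p.val - 1, by omega⟩ then 1 else 0) +
      (if h : p.val = m then 0
        else if σ p < σ ⟨p.val + 1, by have := p.isLt; omega⟩ then 1 else 0) := by
  unfold nbGt
  simp only [Equiv.symm_apply_apply]

lemma fin_tri {m : ℕ} {a b : Fin m} (h : a ≠ b) (h2 : ¬ a < b) : b < a := by
  rcases lt_or_gt_of_ne h with h' | h'
  · exact absurd h' h2
  · exact h'

lemma desc (n : ℕ) (hn : 0 < n) (σ : Equiv.Perm (Fin (2 * n + 1)))
    (hA : IsAlternating σ) (h0 : σ ⟨1, two_n_one_gt_one n hn⟩ < σ ⟨0, two_n_one_pos n⟩) :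
    ∀ p : ℕ, ∀ h : p + 1 < 2 * n + 1,
      (σ ⟨p + 1, h⟩ < σ ⟨p, by omega⟩ ↔ Even p) := by
  intro p
  induction p with
  | zero => intro h; simpa using h0
  | succ p ih =>
    intro h
    have hih := ih (by omega)
    have hAp := hA p (by omega)
    have hne : σ ⟨p, by omega⟩ ≠ σ ⟨p + 1, by omega⟩ := by
      intro hc
      have := σ.injective hc
      simp [Fin.ext_iff] at this
    have htri : (σ ⟨p, by omega⟩ < σ ⟨p + 1, by omega⟩) ↔ ¬ (σ ⟨p + 1, by omega⟩ < σ ⟨p, by omega⟩) := by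
      constructor
      · intro h1 h2; exact absurd h1 (asymm h2)
      · intro h1; exact fin_tri hne.symm h1
    show σ ⟨p + 2, by omega⟩ < σ ⟨p + 1, by omega⟩ ↔ Even (p + 1)
    rw [← hAp, htri, hih, Nat.even_add_one]

lemma nbGt_alt (n : ℕ) (hn : 0 < n) (σ : Equiv.Perm (Fin (2 * n + 1)))
    (hA : IsAlternating σ) (h0 : σ ⟨1, two_n_one_gt_one n hn⟩ < σ ⟨0, two_n_one_pos n⟩)
    (p : Fin (2 * n + 1)) :
    nbGt σ (σ p) = if Odd p.val then 2 else 0 := by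
  have hd := desc n hn σ hA h0
  have hlt := p.isLt
  rw [nbGt_apply]
  by_cases hod : Odd p.val
  · have h1 : 0 < p.val := by rw [Nat.odd_iff] at hod; omega
    have h2 : p.val ≠ 2 * n := by rw [Nat.odd_iff] at hod; omega
    have hl := hd (p.val - 1) (by omega)
    have e1 : (⟨p.val - 1 + 1, by omega⟩ : Fin (2 * n + 1)) = p := Fin.ext (by simp; omega)
    rw [e1] at hl
    have hl' : σ p < σ ⟨p.val - 1, by omega⟩ :=
      hl.mpr (by rw [Nat.even_iff]; rw [Nat.odd_iff] at hod; omega)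
    have hr := hd p.val (by omega)
    have hne : σ p ≠ σ ⟨p.val + 1, by omega⟩ := by
      intro hc
      have := congrArg Fin.val (σ.injective hc)
      simp at this
    have hr' : σ p < σ ⟨p.val + 1, by omega⟩ := by
      apply fin_tri hne.symm
      intro hcon
      have hevp : Even p.val := hr.mp hcon
      rw [Nat.even_iff] at hevp; rw [Nat.odd_iff] at hod; omega
    rw [dif_neg (by omega), dif_neg h2, if_pos hl', if_pos hr', if_pos hod]
  · have hev : Even p.val := Nat.not_odd_iff_even.mp hod
    rw [if_neg hod]
    rcases Nat.eq_zero_or_pos p.val with h0' | h0'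
    · have hr' := (hd p.val (by omega)).mpr hev
      rw [dif_pos h0', dif_neg (by omega), if_neg (asymm hr')]
    · have hl := hd (p.val - 1) (by omega)
      have e1 : (⟨p.val - 1 + 1, by omega⟩ : Fin (2 * n + 1)) = p := Fin.ext (by simp; omega)
      rw [e1] at hl
      have hnl : ¬ (σ p < σ ⟨p.val - 1, by omega⟩) := by
        intro hcon
        have hco := hl.mp hcon
        rw [Nat.even_iff] at hco hev; omega
      rcases eq_or_ne p.val (2 * n) with h2 | h2
      · rw [dif_neg (by omega), dif_pos h2, if_neg hnl]
      · have hr' := (hd p.val (by omega)).mpr hev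
        rw [dif_neg (by omega), dif_neg h2, if_neg hnl, if_neg (asymm hr')]

lemma q_even (n : ℕ) (hn : 0 < n) (σ : Equiv.Perm (Fin (2 * n + 1)))
    (hA : IsAlternating σ) (h0 : σ ⟨1, two_n_one_gt_one n hn⟩ < σ ⟨0, two_n_one_pos n⟩) :
    ¬ Odd ((σ.symm ⟨2 * n, by omega⟩).val) := by
  have key : ∀ p : Fin (2 * n + 1), σ p = ⟨2 * n, by omega⟩ → ¬ Odd p.val := by
    intro p hp hod
    have hd := desc n hn σ hA h0
    have hlt := p.isLt
    have h1 : 0 < p.val := by rw [Nat.odd_iff] at hod; omega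
    have hl2 : σ ⟨p.val - 1 + 1, by omega⟩ < σ ⟨p.val - 1, by omega⟩ :=
      (hd (p.val - 1) (by omega)).mpr
        (by rw [Nat.even_iff]; rw [Nat.odd_iff] at hod; omega)
    have e1 : σ p = σ ⟨p.val - 1 + 1, by omega⟩ := congrArg σ (Fin.ext (by simp; omega))
    have hl' : σ p < σ ⟨p.val - 1, by omega⟩ := lt_of_eq_of_lt e1 hl2
    have hfin : (2 * n) < (σ ⟨p.val - 1, by omega⟩).val :=
      Fin.lt_def.mp (lt_of_eq_of_lt hp.symm hl')
    have := (σ ⟨p.val - 1, by omega⟩).isLt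
    omega
  exact key _ (σ.apply_symm_apply _)

def posN (n : ℕ) (σ : Equiv.Perm (Fin (2 * n + 1))) (v : ℕ) : ℕ :=
  (σ.symm ⟨v % (2 * n + 1), Nat.mod_lt _ (by omega)⟩).val

lemma posN_lt (n : ℕ) (σ : Equiv.Perm (Fin (2 * n + 1))) (v : ℕ) :
    posN n σ v < 2 * n + 1 := by
  unfold posN; exact Fin.isLt _

lemma apply_posN (n : ℕ) (σ : Equiv.Perm (Fin (2 * n + 1))) (v : ℕ) (hv : v < 2 * n + 1) :
    (σ ⟨posN n σ v, posN_lt n σ v⟩).val = v := by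
  show (σ (σ.symm ⟨v % (2 * n + 1), Nat.mod_lt _ (by omega)⟩)).val = v
  rw [Equiv.apply_symm_apply]
  simp [Nat.mod_eq_of_lt hv]

lemma posN_apply (n : ℕ) (σ : Equiv.Perm (Fin (2 * n + 1))) (p : Fin (2 * n + 1)) :
    posN n σ (σ p).val = p.val := by
  unfold posN
  have e : (⟨(σ p).val % (2 * n + 1), Nat.mod_lt _ (by omega)⟩ : Fin (2 * n + 1)) = σ p :=
    Fin.ext (by simp [Nat.mod_eq_of_lt (σ p).isLt])
  rw [e, Equiv.symm_apply_apply]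

lemma posN_inj (n : ℕ) (σ : Equiv.Perm (Fin (2 * n + 1))) (v₁ v₂ : ℕ)
    (h1 : v₁ < 2 * n + 1) (h2 : v₂ < 2 * n + 1) (h : posN n σ v₁ = posN n σ v₂) :
    v₁ = v₂ := by
  have e : (⟨posN n σ v₁, posN_lt n σ v₁⟩ : Fin (2 * n + 1)) = ⟨posN n σ v₂, posN_lt n σ v₂⟩ :=
    Fin.ext h
  calc v₁ = (σ ⟨posN n σ v₁, posN_lt n σ v₁⟩).val := (apply_posN n σ v₁ h1).symm
    _ = (σ ⟨posN n σ v₂, posN_lt n σ v₂⟩).val := by rw [e]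
    _ = v₂ := apply_posN n σ v₂ h2

lemma qpos_eq (n : ℕ) (hn : 0 < n) (σ : Equiv.Perm (Fin (2 * n + 1))) :
    posN n σ (2 * n) = (σ.symm ⟨2 * n, by omega⟩).val := by
  unfold posN
  congr 2
  exact Fin.ext (by simp [Nat.mod_eq_of_lt])

def nbMap (n : ℕ) (σ : Equiv.Perm (Fin (2 * n + 1))) (q : ℕ) (v : ℕ) : ℕ :=
  if posN n σ v < q then (σ ⟨(posN n σ v + 1) % (2 * n + 1), Nat.mod_lt _ (by omega)⟩).val
  else (σ ⟨posN n σ v - 1, by have := posN_lt n σ v; omega⟩).val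

lemma step_even (n : ℕ) (hn : 0 < n) (σ : Equiv.Perm (Fin (2 * n + 1)))
    (hA : IsAlternating σ) (h0 : σ ⟨1, two_n_one_gt_one n hn⟩ < σ ⟨0, two_n_one_pos n⟩)
    (v : ℕ) (hv : v < 2 * n) (hev : ¬ Odd (posN n σ v)) :
    nbMap n σ (posN n σ (2 * n)) v < v ∧
      posN n σ (nbMap n σ (posN n σ (2 * n)) v) =
        (if posN n σ v < posN n σ (2 * n) then posN n σ v + 1 else posN n σ v - 1) := by
  have hd := desc n hn σ hA h0
  have hq2n : posN n σ (2 * n) < 2 * n + 1 := posN_lt n σ _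
  have hple : posN n σ v < 2 * n + 1 := posN_lt n σ v
  have hne : posN n σ v ≠ posN n σ (2 * n) := fun h => by
    have := posN_inj n σ v (2 * n) (by omega) (by omega) h; omega
  have happ : (σ ⟨posN n σ v, hple⟩).val = v := apply_posN n σ v (by omega)
  have hevp : Even (posN n σ v) := Nat.not_odd_iff_even.mp hev
  by_cases hlt : posN n σ v < posN n σ (2 * n)
  · have hmod : (posN n σ v + 1) % (2 * n + 1) = posN n σ v + 1 := Nat.mod_eq_of_lt (by omega)
    have hdesc : σ ⟨posN n σ v + 1, by omega⟩ < σ ⟨posN n σ v, hple⟩ :=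
      (hd (posN n σ v) (by omega)).mpr hevp
    unfold nbMap
    simp only [hlt, if_true, ite_true, hmod]
    constructor
    · have h2 := Fin.lt_def.mp hdesc
      omega
    · simpa using posN_apply n σ ⟨posN n σ v + 1, by omega⟩
  · have hgt : posN n σ (2 * n) < posN n σ v := by omega
    have h1 : 1 ≤ posN n σ v := by omega
    have hiff := hd (posN n σ v - 1) (by omega)
    have e2 : σ ⟨posN n σ v - 1 + 1, by omega⟩ = σ ⟨posN n σ v, hple⟩ :=
      congrArg σ (Fin.ext (by simp; omega))
    have hne2 : σ ⟨posN n σ v, hple⟩ ≠ σ ⟨posN n σ v - 1, by omega⟩ := fun hc => by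
      have h3 := congrArg Fin.val (σ.injective hc)
      simp at h3
      omega
    have hlt2 : σ ⟨posN n σ v - 1, by omega⟩ < σ ⟨posN n σ v, hple⟩ := by
      apply fin_tri hne2
      intro hcon
      have h4 : Even (posN n σ v - 1) := hiff.mp (lt_of_eq_of_lt e2 hcon)
      rw [Nat.even_iff] at h4 hevp
      omega
    unfold nbMap
    simp only [hlt, if_false, ite_false]
    constructor
    · have h2 := Fin.lt_def.mp hlt2
      omega
    · simpa using posN_apply n σ ⟨posN n σ v - 1, by omega⟩

lemma card_le (n : ℕ) (hn : 0 < n) (σ : Equiv.Perm (Fin (2 * n + 1)))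
    (hA : IsAlternating σ) (h0 : σ ⟨1, two_n_one_gt_one n hn⟩ < σ ⟨0, two_n_one_pos n⟩)
    (k : ℕ) (hk : k ≤ 2 * n) :
    ((Finset.range k).filter (fun v => ¬ Odd (posN n σ v))).card ≤
      ((Finset.range k).filter (fun v => Odd (posN n σ v))).card := by
  have hqe : ¬ Odd (posN n σ (2 * n)) := by
    rw [qpos_eq n hn σ]
    exact q_even n hn σ hA h0
  apply Finset.card_le_card_of_injOn (nbMap n σ (posN n σ (2 * n)))
  · intro v hv
    simp only [Finset.mem_coe, Finset.mem_filter, Finset.mem_range] at hv ⊢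
    obtain ⟨hvk, hev⟩ := hv
    obtain ⟨hlt, hposeq⟩ := step_even n hn σ hA h0 v (by omega) hev
    refine ⟨by omega, ?_⟩
    rw [hposeq]
    have hne : posN n σ v ≠ posN n σ (2 * n) := fun h => by
      have := posN_inj n σ v (2 * n) (by omega) (by omega) h; omega
    rw [Nat.odd_iff] at hev hqe ⊢
    split_ifs with h
    · omega
    · omega
  · intro v₁ hv₁ v₂ hv₂ hf
    simp only [Finset.coe_filter, Set.mem_setOf_eq, Finset.mem_range] at hv₁ hv₂
    obtain ⟨hk1, he1⟩ := hv₁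
    obtain ⟨hk2, he2⟩ := hv₂
    obtain ⟨hlt1, hpos1⟩ := step_even n hn σ hA h0 v₁ (by omega) he1
    obtain ⟨hlt2, hpos2⟩ := step_even n hn σ hA h0 v₂ (by omega) he2
    rw [hf] at hpos1
    have hco : (if posN n σ v₁ < posN n σ (2 * n) then posN n σ v₁ + 1 else posN n σ v₁ - 1) =
        (if posN n σ v₂ < posN n σ (2 * n) then posN n σ v₂ + 1 else posN n σ v₂ - 1) := by
      rw [← hpos1, ← hpos2]
    have hne1 : posN n σ v₁ ≠ posN n σ (2 * n) := fun h => by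
      have := posN_inj n σ v₁ (2 * n) (by omega) (by omega) h; omega
    have hne2 : posN n σ v₂ ≠ posN n σ (2 * n) := fun h => by
      have := posN_inj n σ v₂ (2 * n) (by omega) (by omega) h; omega
    have hqe' := hqe
    rw [Nat.odd_iff] at he1 he2 hqe'
    have : posN n σ v₁ = posN n σ v₂ := by
      split_ifs at hco with h1 h2 h2
      · omega
      · omega
      · omega
      · omega
    exact posN_inj n σ v₁ v₂ (by omega) (by omega) this

lemma card_odd_range : ∀ m : ℕ, ((Finset.range (2 * m + 1)).filter (fun v => Odd v)).card = m := by
  intro m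
  induction m with
  | zero => rw [Finset.filter_eq_empty_iff.mpr (by simp [Nat.odd_iff])]; simp
  | succ m ih =>
    have h1 : 2 * (m + 1) + 1 = (2 * m + 1 + 1) + 1 := by ring
    rw [h1, Finset.range_add_one, Finset.range_add_one, Finset.filter_insert, Finset.filter_insert]
    have h2 : ¬ Odd (2 * m + 1 + 1) := by rw [Nat.odd_iff]; omega
    have h3 : Odd (2 * m + 1) := by rw [Nat.odd_iff]; omega
    rw [if_neg h2, if_pos h3, Finset.card_insert_of_notMem (by simp), ih]

lemma card_odd_eq (n : ℕ) (hn : 0 < n) (σ : Equiv.Perm (Fin (2 * n + 1)))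
    (hA : IsAlternating σ) (h0 : σ ⟨1, two_n_one_gt_one n hn⟩ < σ ⟨0, two_n_one_pos n⟩) :
    ((Finset.range (2 * n)).filter (fun v => Odd (posN n σ v))).card = n := by
  have hd := desc n hn σ hA h0
  have main : ((Finset.range (2 * n)).filter (fun v => Odd (posN n σ v))).card =
      ((Finset.range (2 * n + 1)).filter (fun v => Odd v)).card := by
    apply Finset.card_nbij' (i := fun v => posN n σ v)
      (j := fun p => (σ ⟨p % (2 * n + 1), Nat.mod_lt _ (by omega)⟩).val)
    · intro v hv
      simp only [Finset.mem_coe, Finset.mem_filter, Finset.mem_range] at hv ⊢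
      exact ⟨posN_lt n σ v, hv.2⟩
    · intro p hp
      simp only [Finset.mem_coe, Finset.mem_filter, Finset.mem_range] at hp ⊢
      obtain ⟨hplt, hpodd⟩ := hp
      have hmod : p % (2 * n + 1) = p := Nat.mod_eq_of_lt hplt
      have h1 : 0 < p := by rw [Nat.odd_iff] at hpodd; omega
      have hl2 : σ ⟨p - 1 + 1, by omega⟩ < σ ⟨p - 1, by omega⟩ :=
        (hd (p - 1) (by omega)).mpr
          (by rw [Nat.even_iff]; rw [Nat.odd_iff] at hpodd; omega)
      have e1 : σ ⟨p % (2 * n + 1), Nat.mod_lt _ (by omega)⟩ = σ ⟨p - 1 + 1, by omega⟩ :=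
        congrArg σ (Fin.ext (by simp [hmod]; omega))
      have hval : (σ ⟨p % (2 * n + 1), Nat.mod_lt _ (by omega)⟩).val <
          (σ ⟨p - 1, by omega⟩).val := Fin.lt_def.mp (lt_of_eq_of_lt e1 hl2)
      have hb := (σ ⟨p - 1, by omega⟩).isLt
      constructor
      · omega
      · have := posN_apply n σ ⟨p % (2 * n + 1), Nat.mod_lt _ (by omega)⟩
        simp only [this]
        simpa [hmod] using hpodd
    · intro v hv
      simp only [Finset.mem_coe, Finset.mem_filter, Finset.mem_range] at hv
      have hmod : posN n σ v % (2 * n + 1) = posN n σ v := Nat.mod_eq_of_lt (posN_lt n σ v)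
      have e1 : σ ⟨posN n σ v % (2 * n + 1), Nat.mod_lt _ (by omega)⟩ =
          σ ⟨posN n σ v, posN_lt n σ v⟩ := congrArg σ (Fin.ext (by simp [hmod]))
      beta_reduce; rw [e1]
      exact apply_posN n σ v (by omega)
    · intro p hp
      simp only [Finset.mem_coe, Finset.mem_filter, Finset.mem_range] at hp
      have := posN_apply n σ ⟨p % (2 * n + 1), Nat.mod_lt _ (by omega)⟩
      simp only [this]
      simp [Nat.mod_eq_of_lt hp.1]
  rw [main, card_odd_range n]

noncomputable def GN (n : ℕ) (σ : Equiv.Perm (Fin (2 * n + 1))) (v : ℕ) : ℤ :=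
  if Odd (posN n σ v) then 1 else -1

lemma entry_eq (n : ℕ) (hn : 0 < n) (σ : Equiv.Perm (Fin (2 * n + 1)))
    (hA : IsAlternating σ) (h0 : σ ⟨1, two_n_one_gt_one n hn⟩ < σ ⟨0, two_n_one_pos n⟩)
    (j : Fin (2 * n)) :
    (nbGt σ j.castSucc : ℤ) - 1 = GN n σ j.val := by
  have hjlt : j.val < 2 * n + 1 := by have := j.isLt; omega
  have e : σ ⟨posN n σ j.val, posN_lt n σ j.val⟩ = j.castSucc := by
    apply Fin.ext
    rw [apply_posN n σ j.val hjlt]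
    simp
  have h2 : nbGt σ j.castSucc = if Odd (posN n σ j.val) then 2 else 0 := by
    calc nbGt σ j.castSucc
        = nbGt σ (σ ⟨posN n σ j.val, posN_lt n σ j.val⟩) := congrArg (nbGt σ) e.symm
      _ = _ := by simpa using nbGt_alt n hn σ hA h0 ⟨posN n σ j.val, posN_lt n σ j.val⟩
  rw [h2]
  unfold GN
  split_ifs <;> norm_num

lemma sum_eq (n : ℕ) (hn : 0 < n) (σ : Equiv.Perm (Fin (2 * n + 1)))
    (hA : IsAlternating σ) (h0 : σ ⟨1, two_n_one_gt_one n hn⟩ < σ ⟨0, two_n_one_pos n⟩)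
    (k : ℕ) (hk : k ≤ 2 * n) :
    ((PhiList (2 * n) σ).take k).sum =
      (((Finset.range k).filter (fun v => Odd (posN n σ v))).card : ℤ) -
      (((Finset.range k).filter (fun v => ¬ Odd (posN n σ v))).card : ℤ) := by
  unfold PhiList
  rw [List.sum_take_ofFn]
  have h1 : ∑ j ∈ Finset.univ.filter (fun j : Fin (2 * n) => j.val < k),
      ((nbGt σ j.castSucc : ℤ) - 1)
      = ∑ j ∈ Finset.univ.filter (fun j : Fin (2 * n) => j.val < k), GN n σ j.val :=
    Finset.sum_congr rfl (fun j _ => entry_eq n hn σ hA h0 j)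
  rw [h1]
  have h2 : ∑ j ∈ Finset.univ.filter (fun j : Fin (2 * n) => j.val < k), GN n σ j.val
      = ∑ v ∈ Finset.range k, GN n σ v := by
    rw [Finset.sum_filter]
    rw [Fin.sum_univ_eq_sum_range (fun v => if v < k then GN n σ v else 0) (2 * n)]
    rw [← Finset.sum_filter]
    congr 1
    ext v
    simp only [Finset.mem_filter, Finset.mem_range]
    omega
  rw [h2]
  unfold GN
  rw [Finset.sum_ite _ _, Finset.sum_const, Finset.sum_const]
  push_cast
  ring

lemma nbGt_zero (n : ℕ) (hn : 0 < n) (σ : Equiv.Perm (Fin (2 * n + 1))) :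
    nbGt σ (σ ⟨0, two_n_one_pos n⟩) =
      if σ ⟨0, two_n_one_pos n⟩ < σ ⟨1, two_n_one_gt_one n hn⟩ then 1 else 0 := by
  rw [nbGt_apply σ ⟨0, by omega⟩]
  rw [dif_pos rfl, dif_neg (by simp; omega)]
  have e : σ ⟨(0 : ℕ) + 1, by omega⟩ = σ ⟨1, by omega⟩ := congrArg σ (Fin.ext (by simp))
  simp only [e, Nat.zero_add]

lemma nbGt_mid (n : ℕ) (hn : 0 < n) (σ : Equiv.Perm (Fin (2 * n + 1)))
    (j : ℕ) (hj : j + 2 < 2 * n + 1) :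
    nbGt σ (σ ⟨j + 1, by omega⟩) =
      (if σ ⟨j + 1, by omega⟩ < σ ⟨j, by omega⟩ then 1 else 0) +
      (if σ ⟨j + 1, by omega⟩ < σ ⟨j + 2, hj⟩ then 1 else 0) := by
  rw [nbGt_apply σ ⟨j + 1, by omega⟩]
  rw [dif_neg (by simp), dif_neg (by simp; omega)]
  have e1 : σ ⟨j + 1 - 1, by omega⟩ = σ ⟨j, by omega⟩ := congrArg σ (Fin.ext (by simp))
  have e2 : σ ⟨j + 1 + 1, by omega⟩ = σ ⟨j + 2, hj⟩ := congrArg σ (Fin.ext (by simp))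
  simp only [e1, e2]

/-- For `σ ∈ S_{2n+1}`, `Φ(σ)` is a Dyck path iff `σ` is alternating with
`σ(1) > σ(2)`. -/
theorem phiList_isDyck_iff (n : ℕ) (hn : 0 < n) (σ : Equiv.Perm (Fin (2 * n + 1))) :
    IsDyck (PhiList (2 * n) σ) ↔
      (IsAlternating σ ∧ σ ⟨1, by omega⟩ < σ ⟨0, by omega⟩) := by
  have hlen : (PhiList (2 * n) σ).length = 2 * n := by
    unfold PhiList; simp
  constructor
  · rintro ⟨h1, _, _⟩
    have hpm : ∀ i : Fin (2 * n), nbGt σ i.castSucc = 0 ∨ nbGt σ i.castSucc = 2 := by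
      intro i
      have hx : ((nbGt σ i.castSucc : ℤ) - 1) ∈ PhiList (2 * n) σ := by
        unfold PhiList
        exact List.mem_ofFn.mpr ⟨i, rfl⟩
      have := h1 _ hx
      omega
    have key : ∀ b : Fin (2 * n + 1), b.val < 2 * n → nbGt σ b = 0 ∨ nbGt σ b = 2 := by
      intro b hb
      have he : (⟨b.val, hb⟩ : Fin (2 * n)).castSucc = b := Fin.ext (by simp)
      have hc := hpm ⟨b.val, hb⟩
      have h2 := congrArg (nbGt σ) he
      omega
    constructor
    · intro j hj
      have hab_ne : σ ⟨j, by omega⟩ ≠ σ ⟨j + 1, by omega⟩ := fun hc => by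
        have := congrArg Fin.val (σ.injective hc); simp at this
      have hcb_ne : σ ⟨j + 2, hj⟩ ≠ σ ⟨j + 1, by omega⟩ := fun hc => by
        have := congrArg Fin.val (σ.injective hc); simp at this
      have hmid := nbGt_mid n hn σ j hj
      constructor
      · intro hab
        by_contra hcb
        have hbc : σ ⟨j + 1, by omega⟩ < σ ⟨j + 2, hj⟩ := fin_tri hcb_ne hcb
        have hone : nbGt σ (σ ⟨j + 1, by omega⟩) = 1 := by
          rw [hmid, if_neg (asymm hab), if_pos hbc]
        have hvb : (σ ⟨j + 1, by omega⟩).val < 2 * n := by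
          have := Fin.lt_def.mp hbc
          have := (σ ⟨j + 2, hj⟩).isLt
          omega
        have := key _ hvb
        omega
      · intro hcb
        by_contra hab
        have hba : σ ⟨j + 1, by omega⟩ < σ ⟨j, by omega⟩ := fin_tri hab_ne hab
        have hone : nbGt σ (σ ⟨j + 1, by omega⟩) = 1 := by
          rw [hmid, if_pos hba, if_neg (asymm hcb)]
        have hvb : (σ ⟨j + 1, by omega⟩).val < 2 * n := by
          have := Fin.lt_def.mp hba
          have := (σ ⟨j, by omega⟩).isLt
          omega
        have := key _ hvb
        omega
    · by_contra h0'
      have hne : σ ⟨1, by omega⟩ ≠ σ ⟨0, by omega⟩ := fun hc => by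
        have := congrArg Fin.val (σ.injective hc); simp at this
      have h01 : σ ⟨0, by omega⟩ < σ ⟨1, by omega⟩ := fin_tri hne h0'
      have hone : nbGt σ (σ ⟨0, by omega⟩) = 1 := by
        rw [nbGt_zero n hn σ, if_pos h01]
      have hvb : (σ ⟨0, by omega⟩).val < 2 * n := by
        have := Fin.lt_def.mp h01
        have := (σ ⟨1, by omega⟩).isLt
        omega
      have := key _ hvb
      omega
  · rintro ⟨hA, h0⟩
    have hAcard : ∀ k ≤ 2 * n,
        (((Finset.range k).filter (fun v => Odd (posN n σ v))).card : ℤ) -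
        (((Finset.range k).filter (fun v => ¬ Odd (posN n σ v))).card : ℤ) ≥ 0 := by
      intro k hk
      have := card_le n hn σ hA h0 k hk
      omega
    refine ⟨?_, ?_, ?_⟩
    · intro x hx
      unfold PhiList at hx
      rw [List.mem_ofFn] at hx
      obtain ⟨i, rfl⟩ := hx
      show ((nbGt σ i.castSucc : ℤ) - 1) = -1 ∨ ((nbGt σ i.castSucc : ℤ) - 1) = 1
      rw [entry_eq n hn σ hA h0 i]
      unfold GN
      split_ifs
      · right; rfl
      · left; rfl
    · have htake : (PhiList (2 * n) σ).take (2 * n) = PhiList (2 * n) σ := by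
        exact List.take_of_length_le (le_of_eq hlen)
      have h := sum_eq n hn σ hA h0 (2 * n) le_rfl
      rw [htake] at h
      have hodd := card_odd_eq n hn σ hA h0
      have hsplit := Finset.card_filter_add_card_filter_not
        (s := Finset.range (2 * n)) (p := fun v => Odd (posN n σ v))
      rw [Finset.card_range] at hsplit
      rw [h, hodd]
      have : ((Finset.range (2 * n)).filter (fun v => ¬ Odd (posN n σ v))).card = n := by
        omega
      rw [this]
      ring
    · intro k hk
      rw [hlen] at hk
      rw [sum_eq n hn σ hA h0 k (by omega)]
      have := card_le n hn σ hA h0 k (by omega)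
      omega
end
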